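/- Let τ > 0 and b ∈ ℂ. Define â = T(Re b) + i·T(Im b), where for a real number x, T(x) = x if |x| > √(2τ) and T(x) = 0 otherwise. Then for every a ∈ ℂ: (1/2)·|â − b|² + τ·( 𝟙_{Re â ≠ 0} + 𝟙_{Im â ≠ 0} ) ≤ (1/2)·|a − b|² + τ·( 𝟙_{Re a ≠ 0} + 𝟙_{Im a ≠ 0} ). That is, separately hard thresholding the real and imaginary parts at level √(2τ) gives a global minimizer for the anisotropic L⁰ penalty. -/

import Mathlib

open Classical in
lemma hard_thresholding_real_1d (τ : ℝ) (hτ : 0 < τ) (x y : ℝ) :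
    (1 / 2) * ((if Real.sqrt (2 * τ) < |x| then x else 0) - x) ^ 2
        + τ * (if (if Real.sqrt (2 * τ) < |x| then x else 0) = 0 then 0 else 1) ≤
    (1 / 2) * (y - x) ^ 2 + τ * (if y = 0 then 0 else 1) := by
  have hs : 0 < Real.sqrt (2 * τ) := Real.sqrt_pos.mpr (by linarith)
  by_cases h : Real.sqrt (2 * τ) < |x|
  · have hx : x ≠ 0 := by
      intro h0; rw [h0, abs_zero] at h; linarith
    simp only [h, if_true, hx, if_false, sub_self]
    by_cases hy : y = 0
    · have hx2 : 2 * τ < x ^ 2 := by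
        have := Real.sq_sqrt (by linarith : (0:ℝ) ≤ 2 * τ)
        nlinarith [sq_abs x, abs_nonneg x]
      simp only [hy, if_true]
      nlinarith
    · simp only [hy, if_false]
      nlinarith [sq_nonneg (y - x)]
  · have hx2 : x ^ 2 ≤ 2 * τ := by
      have h1 : |x| ≤ Real.sqrt (2 * τ) := le_of_not_gt h
      have := Real.sq_sqrt (by linarith : (0:ℝ) ≤ 2 * τ)
      nlinarith [sq_abs x, abs_nonneg x]
    simp only [h, if_false, if_true, zero_sub, mul_zero, add_zero]
    by_cases hy : y = 0
    · simp [hy]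
    · simp only [hy, if_false]
      nlinarith [sq_nonneg (y - x)]

open Classical in
/-- Separately hard thresholding the real and imaginary parts at level `√(2τ)`
gives a global minimizer of the scalar proximal problem for the anisotropic `L⁰`
penalty `a ↦ (1/2)|a − b|² + τ(𝟙_{Re a ≠ 0} + 𝟙_{Im a ≠ 0})`. -/
theorem hard_thresholding_aniso_scalar_minimizer (τ : ℝ) (hτ : 0 < τ) (b : ℂ)
    (ahat : ℂ)
    (hahat : ahat =
      ((if Real.sqrt (2 * τ) < |b.re| then b.re else 0 : ℝ) : ℂ) +
        Complex.I * ((if Real.sqrt (2 * τ) < |b.im| then b.im else 0 : ℝ) : ℂ)) :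
    ∀ a : ℂ,
      (1 / 2) * ‖ahat - b‖ ^ 2
          + τ * ((if ahat.re = 0 then 0 else 1) + (if ahat.im = 0 then 0 else 1)) ≤
      (1 / 2) * ‖a - b‖ ^ 2
          + τ * ((if a.re = 0 then 0 else 1) + (if a.im = 0 then 0 else 1)) := by
  intro a
  have hre : ahat.re = (if Real.sqrt (2 * τ) < |b.re| then b.re else 0 : ℝ) := by
    rw [hahat]; simp
  have him : ahat.im = (if Real.sqrt (2 * τ) < |b.im| then b.im else 0 : ℝ) := by
    rw [hahat]; simp
  have key : ∀ z : ℂ, ‖z‖ ^ 2 = z.re ^ 2 + z.im ^ 2 := by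
    intro z
    rw [Complex.sq_norm, Complex.normSq_apply]; ring
  rw [key, key]
  have h1 := hard_thresholding_real_1d τ hτ b.re a.re
  have h2 := hard_thresholding_real_1d τ hτ b.im a.im
  rw [← hre] at h1
  rw [← him] at h2
  simp only [Complex.sub_re, Complex.sub_im] at *
  linarith
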